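/- Piecewise linear extension preserves convexity: let T ⊂ ℝ be a closed set containing its infimum a and supremum b, and f : T → ℝ. Define f̄ : [a,b] → ℝ by f̄(t) = f(t) for t ∈ T, and f̄(t) = f(s) + ((f(σ(s)) − f(s))/(σ(s) − s))·(t − s) for t in a gap (s, σ(s)), where σ(s) = inf{τ ∈ T : τ > s}. Then f̄ is convex on [a,b] if and only if f is convex on T (i.e., f(λx + (1−λ)y) ≤ λf(x) + (1−λ)f(y) whenever x, y ∈ T, λ ∈ [0,1], and λx+(1−λ)y ∈ T). -/

import Mathlib

open Classical

/-- Forward jump operator of a set T ⊆ ℝ. -/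
noncomputable def tsSigma (T : Set ℝ) (s : ℝ) : ℝ := sInf {τ ∈ T | s < τ}

/-- Piecewise linear extension of f : ℝ → ℝ (viewed on T) to the real line:
it agrees with f on T and interpolates linearly across each gap (s, σ(s)). -/

noncomputable def pwExt (T : Set ℝ) (f : ℝ → ℝ) (x : ℝ) : ℝ :=
  if x ∈ T then f x
  else
    let s := sSup (T ∩ Set.Iic x)
    f s + ((f (tsSigma T s) - f s) / (tsSigma T s - s)) * (x - s)

lemma pwExt_mem {T : Set ℝ} {f : ℝ → ℝ} {x : ℝ} (h : x ∈ T) : pwExt T f x = f x := by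
  simp [pwExt, h]

lemma gap_struct {T : Set ℝ} (hT : IsClosed T) {a b : ℝ}
    (ha : IsLeast T a) (hb : IsGreatest T b) {x : ℝ}
    (hx : x ∈ Set.Icc a b) (hxT : x ∉ T) :
    sSup (T ∩ Set.Iic x) ∈ T ∧ sSup (T ∩ Set.Iic x) < x ∧
      tsSigma T (sSup (T ∩ Set.Iic x)) ∈ T ∧ x < tsSigma T (sSup (T ∩ Set.Iic x)) ∧
      (∀ w ∈ T, w ≤ x → w ≤ sSup (T ∩ Set.Iic x)) ∧
      (∀ w ∈ T, sSup (T ∩ Set.Iic x) < w → tsSigma T (sSup (T ∩ Set.Iic x)) ≤ w) := by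
  set s := sSup (T ∩ Set.Iic x) with hs
  have hne : (T ∩ Set.Iic x).Nonempty := ⟨a, ha.1, hx.1⟩
  have hbdd : BddAbove (T ∩ Set.Iic x) := ⟨x, fun τ hτ => hτ.2⟩
  have hsmem : s ∈ T ∩ Set.Iic x := (hT.inter isClosed_Iic).csSup_mem hne hbdd
  have hsT : s ∈ T := hsmem.1
  have hsx : s < x := lt_of_le_of_ne hsmem.2 (fun h => hxT (h ▸ hsT))
  have hup : ∀ w ∈ T, w ≤ x → w ≤ s := fun w hw hwx => le_csSup hbdd ⟨hw, hwx⟩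
  have hxb : x < b := lt_of_le_of_ne hx.2 (fun h => hxT (h ▸ hb.1))
  have hbB : b ∈ {τ ∈ T | s < τ} := ⟨hb.1, hsx.trans hxb⟩
  have hBne : Set.Nonempty {τ ∈ T | s < τ} := Set.nonempty_of_mem hbB
  have hBlow : ∀ τ ∈ {τ ∈ T | s < τ}, x ≤ τ := by
    intro τ hτ
    by_contra h
    exact absurd (hup τ hτ.1 (le_of_not_ge (fun h2 => h (lt_of_le_of_ne h2 (fun he => hxT (he ▸ hτ.1))).le))) (not_le.2 hτ.2)
  have hBbdd : BddBelow {τ ∈ T | s < τ} := ⟨x, hBlow⟩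
  have htcl : tsSigma T s ∈ closure {τ ∈ T | s < τ} := csInf_mem_closure hBne hBbdd
  have htT : tsSigma T s ∈ T := closure_minimal (fun τ hτ => hτ.1) hT htcl
  have hxt : x ≤ tsSigma T s := le_csInf hBne hBlow
  have hxt' : x < tsSigma T s := lt_of_le_of_ne hxt (fun h => hxT (h ▸ htT))
  exact ⟨hsT, hsx, htT, hxt', hup, fun w hw hsw => csInf_le hBbdd ⟨hw, hsw⟩⟩

lemma pwExt_gap {T : Set ℝ} {f : ℝ → ℝ} {s t : ℝ} (hs : s ∈ T) (ht : t ∈ T) (hst : s < t)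
    (hgap : ∀ w ∈ T, w ≤ s ∨ t ≤ w) {w : ℝ} (hw1 : s ≤ w) (hw2 : w ≤ t) :
    (t - s) * pwExt T f w = (t - w) * f s + (w - s) * f t := by
  rcases eq_or_lt_of_le hw1 with rfl | hsw
  · rw [pwExt_mem hs]; ring
  rcases eq_or_lt_of_le hw2 with rfl | hwt
  · rw [pwExt_mem ht]; ring
  have hwT : w ∉ T := by
    intro hw
    rcases hgap w hw with h | h <;> linarith
  have hs' : sSup (T ∩ Set.Iic w) = s := by
    apply le_antisymm
    · have hne : (T ∩ Set.Iic w).Nonempty := ⟨s, hs, hsw.le⟩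
      apply csSup_le hne
      rintro τ ⟨hτT, hτw⟩
      rcases hgap τ hτT with h | h
      · exact h
      · exact absurd (h.trans hτw) (not_le.2 hwt)
    · have hbdd : BddAbove (T ∩ Set.Iic w) := ⟨w, fun τ hτ => hτ.2⟩
      exact le_csSup hbdd ⟨hs, hsw.le⟩
  have hts : tsSigma T s = t := by
    apply le_antisymm
    · have hbdd : BddBelow {τ ∈ T | s < τ} := ⟨s, fun τ hτ => hτ.2.le⟩
      exact csInf_le hbdd ⟨ht, hst⟩
    · exact le_csInf ⟨t, ht, hst⟩ fun τ hτ => (hgap τ hτ.1).resolve_left (not_le.2 hτ.2)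
  have hval : pwExt T f w = f s + ((f t - f s) / (t - s)) * (w - s) := by
    simp only [pwExt, if_neg hwT]
    rw [hs', hts]
  rw [hval]
  have hts0 : t - s ≠ 0 := by linarith
  field_simp
  ring

section Conv

variable {T : Set ℝ} {a b : ℝ} {f : ℝ → ℝ}

variable (hT : IsClosed T) (ha : IsLeast T a) (hb : IsGreatest T b)
variable (hconv : ∀ x ∈ T, ∀ y ∈ T, ∀ l ∈ Set.Icc (0 : ℝ) 1,
    l * x + (1 - l) * y ∈ T → f (l * x + (1 - l) * y) ≤ l * f x + (1 - l) * f y)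

include hconv in
lemma three_pt {c p d : ℝ} (hc : c ∈ T) (hp : p ∈ T) (hd : d ∈ T)
    (h1 : c ≤ p) (h2 : p ≤ d) :
    (d - c) * f p ≤ (d - p) * f c + (p - c) * f d := by
  rcases eq_or_lt_of_le (h1.trans h2) with rfl | hcd
  · have hpc : p = c := le_antisymm h2 h1
    subst hpc
    have : (0:ℝ) ≤ 0 := le_rfl
    nlinarith [this]
  · set l := (d - p) / (d - c) with hl
    have hdc : (0 : ℝ) < d - c := by linarith
    have hl0 : 0 ≤ l := div_nonneg (by linarith) hdc.le
    have hl1 : l ≤ 1 := by rw [hl, div_le_one hdc]; linarith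
    have hcomb : l * c + (1 - l) * d = p := by
      rw [hl]; field_simp; ring
    have hkey := hconv c hc d hd l ⟨hl0, hl1⟩ (by rw [hcomb]; exact hp)
    rw [hcomb] at hkey
    have hmul := mul_le_mul_of_nonneg_left hkey hdc.le
    have heq : (d - c) * (l * f c + (1 - l) * f d) = (d - p) * f c + (p - c) * f d := by
      rw [hl]; field_simp; ring
    linarith

include hT ha hb hconv in
lemma step2 {c p y : ℝ} (hc : c ∈ T) (hp : p ∈ T) (hcp : c < p)
    (hy : y ∈ Set.Icc a b) (hpy : p < y) :
    (y - c) * f p ≤ (y - p) * f c + (p - c) * pwExt T f y := by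
  by_cases hyT : y ∈ T
  · rw [pwExt_mem hyT]
    exact three_pt hconv hc hp hyT hcp.le hpy.le
  · obtain ⟨hdT, hdy, heT, hye, hup, hlow⟩ := gap_struct hT ha hb hy hyT
    set d := sSup (T ∩ Set.Iic y) with hdd
    set e := tsSigma T d with hee
    have hpd : p ≤ d := hup p hp hpy.le
    have hgap : ∀ w ∈ T, w ≤ d ∨ e ≤ w := fun w hw => (le_or_gt w d).imp id (hlow w hw)
    have hL : (e - d) * pwExt T f y = (e - y) * f d + (y - d) * f e :=
      pwExt_gap hdT heT (hdy.trans hye) hgap hdy.le hye.le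
    have h1 : (d - c) * f p ≤ (d - p) * f c + (p - c) * f d :=
      three_pt hconv hc hp hdT hcp.le hpd
    have h2 : (e - c) * f p ≤ (e - p) * f c + (p - c) * f e :=
      three_pt hconv hc hp heT hcp.le (hpd.trans (by linarith))
    have hm1 : 0 ≤ (e - y) * ((d - p) * f c + (p - c) * f d - (d - c) * f p) :=
      mul_nonneg (by linarith) (by linarith)
    have hm2 : 0 ≤ (y - d) * ((e - p) * f c + (p - c) * f e - (e - c) * f p) :=
      mul_nonneg (by linarith) (by linarith)
    have key : (e - d) * ((y - p) * f c + (p - c) * pwExt T f y - (y - c) * f p)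
        = (e - y) * ((d - p) * f c + (p - c) * f d - (d - c) * f p)
          + (y - d) * ((e - p) * f c + (p - c) * f e - (e - c) * f p)
          + (p - c) * ((e - d) * pwExt T f y - ((e - y) * f d + (y - d) * f e)) := by
      ring
    have hz : (e - d) * pwExt T f y - ((e - y) * f d + (y - d) * f e) = 0 := by linarith
    rw [hz, mul_zero, add_zero] at key
    have hG : 0 ≤ (e - d) * ((y - p) * f c + (p - c) * pwExt T f y - (y - c) * f p) := by
      linarith
    have hed : (0 : ℝ) < e - d := by linarith
    nlinarith [hG, hed]

include hT ha hb hconv in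
lemma step1 {p x y : ℝ} (hp : p ∈ T) (hx : x ∈ Set.Icc a b) (hy : y ∈ Set.Icc a b)
    (hxp : x < p) (hpy : p < y) :
    (y - x) * f p ≤ (y - p) * pwExt T f x + (p - x) * pwExt T f y := by
  by_cases hxT : x ∈ T
  · rw [pwExt_mem hxT]
    exact step2 hT ha hb hconv hxT hp hxp hy hpy
  · obtain ⟨hsT, hsx, hcT, hxc, hup, hlow⟩ := gap_struct hT ha hb hx hxT
    set s := sSup (T ∩ Set.Iic x) with hss
    set c := tsSigma T s with hcc
    have hcp : c ≤ p := hlow p hp (hsx.trans hxp)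
    have hgap : ∀ w ∈ T, w ≤ s ∨ c ≤ w := fun w hw => (le_or_gt w s).imp id (hlow w hw)
    have hL : (c - s) * pwExt T f x = (c - x) * f s + (x - s) * f c :=
      pwExt_gap hsT hcT (hsx.trans hxc) hgap hsx.le hxc.le
    have hEs : (y - s) * f p ≤ (y - p) * f s + (p - s) * pwExt T f y :=
      step2 hT ha hb hconv hsT hp (hsx.trans hxp) hy hpy
    have hEc : (y - c) * f p ≤ (y - p) * f c + (p - c) * pwExt T f y := by
      rcases eq_or_lt_of_le hcp with rfl | hcp'
      · nlinarith [le_refl ((y - c) * f c)]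
      · exact step2 hT ha hb hconv hcT hp hcp' hy hpy
    have key : (c - s) * ((y - p) * pwExt T f x + (p - x) * pwExt T f y - (y - x) * f p)
        = (c - x) * ((y - p) * f s + (p - s) * pwExt T f y - (y - s) * f p)
          + (x - s) * ((y - p) * f c + (p - c) * pwExt T f y - (y - c) * f p)
          + (y - p) * ((c - s) * pwExt T f x - ((c - x) * f s + (x - s) * f c)) := by
      ring
    have hz : (c - s) * pwExt T f x - ((c - x) * f s + (x - s) * f c) = 0 := by linarith
    rw [hz, mul_zero, add_zero] at key
    have hm1 : 0 ≤ (c - x) * ((y - p) * f s + (p - s) * pwExt T f y - (y - s) * f p) :=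
      mul_nonneg (by linarith) (by linarith)
    have hm2 : 0 ≤ (x - s) * ((y - p) * f c + (p - c) * pwExt T f y - (y - c) * f p) :=
      mul_nonneg (by linarith) (by linarith)
    have hG : 0 ≤ (c - s) * ((y - p) * pwExt T f x + (p - x) * pwExt T f y - (y - x) * f p) := by
      linarith
    have hcs : (0 : ℝ) < c - s := by linarith
    nlinarith [hG, hcs]

include hT ha hb hconv in
lemma main3 {x y z : ℝ} (hx : x ∈ Set.Icc a b) (hy : y ∈ Set.Icc a b)
    (hxz : x < z) (hzy : z < y) :
    (y - x) * pwExt T f z ≤ (y - z) * pwExt T f x + (z - x) * pwExt T f y := by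
  have hz : z ∈ Set.Icc a b := ⟨hx.1.trans hxz.le, hzy.le.trans hy.2⟩
  by_cases hzT : z ∈ T
  · rw [pwExt_mem hzT]
    exact step1 hT ha hb hconv hzT hx hy hxz hzy
  · obtain ⟨huT, huz, hvT, hzv, hup, hlow⟩ := gap_struct hT ha hb hz hzT
    set u := sSup (T ∩ Set.Iic z) with huu
    set v := tsSigma T u with hvv
    have hgap : ∀ w ∈ T, w ≤ u ∨ v ≤ w := fun w hw => (le_or_gt w u).imp id (hlow w hw)
    set p := max u x with hpp
    set q := min v y with hqq
    have hpz : p < z := max_lt huz hxz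
    have hzq : z < q := lt_min hzv hzy
    have hxp : x ≤ p := le_max_right _ _
    have hqy : q ≤ y := min_le_right _ _
    have hup' : u ≤ p := le_max_left _ _
    have hqv : q ≤ v := min_le_left _ _
    have huv : u < v := huz.trans hzv
    have hLz : (v - u) * pwExt T f z = (v - z) * f u + (z - u) * f v :=
      pwExt_gap huT hvT huv hgap huz.le hzv.le
    have hLp : (v - u) * pwExt T f p = (v - p) * f u + (p - u) * f v :=
      pwExt_gap huT hvT huv hgap hup' (by linarith)
    have hLq : (v - u) * pwExt T f q = (v - q) * f u + (q - u) * f v :=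
      pwExt_gap huT hvT huv hgap (by linarith) hqv
    have hvu0 : v - u ≠ 0 := by linarith
    have haff : (q - p) * pwExt T f z = (q - z) * pwExt T f p + (z - p) * pwExt T f q := by
      have h2 : (v - u) * ((q - p) * pwExt T f z
          - ((q - z) * pwExt T f p + (z - p) * pwExt T f q)) = 0 := by
        linear_combination (q - p) * hLz - (q - z) * hLp - (z - p) * hLq
      rcases mul_eq_zero.mp h2 with h | h
      · exact absurd h hvu0
      · linarith
    have hEp : 0 ≤ (y - p) * pwExt T f x + (p - x) * pwExt T f y - (y - x) * pwExt T f p := by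
      rcases le_or_gt u x with h | h
      · have hpx : p = x := max_eq_right h
        rw [hpx]
        nlinarith [le_refl ((y - x) * pwExt T f x)]
      · have hpu : p = u := max_eq_left h.le
        rw [hpu, pwExt_mem huT]
        have := step1 hT ha hb hconv huT hx hy h (huz.trans hzy)
        linarith
    have hEq : 0 ≤ (y - q) * pwExt T f x + (q - x) * pwExt T f y - (y - x) * pwExt T f q := by
      rcases le_or_gt y v with h | h
      · have hqy' : q = y := min_eq_right h
        rw [hqy']
        nlinarith [le_refl ((y - x) * pwExt T f y)]
      · have hqv' : q = v := min_eq_left h.le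
        rw [hqv', pwExt_mem hvT]
        have := step1 hT ha hb hconv hvT hx hy (hxz.trans hzv) h
        linarith
    have key : (q - p) * ((y - z) * pwExt T f x + (z - x) * pwExt T f y - (y - x) * pwExt T f z)
        = (q - z) * ((y - p) * pwExt T f x + (p - x) * pwExt T f y - (y - x) * pwExt T f p)
          + (z - p) * ((y - q) * pwExt T f x + (q - x) * pwExt T f y - (y - x) * pwExt T f q)
          + (y - x) * ((q - z) * pwExt T f p + (z - p) * pwExt T f q - (q - p) * pwExt T f z) := by
      ring
    have h0 : (q - z) * pwExt T f p + (z - p) * pwExt T f q - (q - p) * pwExt T f z = 0 := by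
      linarith
    rw [h0, mul_zero, add_zero] at key
    have hm1 : 0 ≤ (q - z) * ((y - p) * pwExt T f x + (p - x) * pwExt T f y - (y - x) * pwExt T f p) :=
      mul_nonneg (by linarith) hEp
    have hm2 : 0 ≤ (z - p) * ((y - q) * pwExt T f x + (q - x) * pwExt T f y - (y - x) * pwExt T f q) :=
      mul_nonneg (by linarith) hEq
    have hG : 0 ≤ (q - p) * ((y - z) * pwExt T f x + (z - x) * pwExt T f y - (y - x) * pwExt T f z) := by
      linarith
    have hqp : (0 : ℝ) < q - p := by linarith
    nlinarith [hG, hqp]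

include hT ha hb hconv in
lemma combo {x y lam mu : ℝ} (hx : x ∈ Set.Icc a b) (hy : y ∈ Set.Icc a b)
    (hlam : 0 ≤ lam) (hmu : 0 ≤ mu) (hlm : lam + mu = 1) (hxy : x ≤ y) :
    pwExt T f (lam * x + mu * y) ≤ lam * pwExt T f x + mu * pwExt T f y := by
  rcases eq_or_lt_of_le hxy with rfl | hxy'
  · have h1 : lam * x + mu * x = x := by linear_combination x * hlm
    rw [h1]
    have h2 : lam * pwExt T f x + mu * pwExt T f x = pwExt T f x := by
      linear_combination (pwExt T f x) * hlm
    linarith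
  rcases eq_or_lt_of_le hlam with hl0 | hl0
  · have hmu1 : mu = 1 := by linarith
    rw [← hl0, hmu1]
    simp
  rcases eq_or_lt_of_le hmu with hm0 | hm0
  · have hlam1 : lam = 1 := by linarith
    rw [← hm0, hlam1]
    simp
  set z := lam * x + mu * y with hzz
  have h1 : z - x = mu * (y - x) := by rw [hzz]; linear_combination x * hlm
  have h2 : y - z = lam * (y - x) := by rw [hzz]; linear_combination (-y) * hlm
  have hxz : x < z := by nlinarith [mul_pos hm0 (sub_pos.2 hxy')]
  have hzy : z < y := by nlinarith [mul_pos hl0 (sub_pos.2 hxy')]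
  have hmain := main3 hT ha hb hconv hx hy hxz hzy
  rw [h1, h2] at hmain
  have hyx : (0 : ℝ) < y - x := by linarith
  nlinarith [hmain, hyx]

end Conv

/-- The piecewise linear extension f̄ is convex on [a,b] iff f is convex on T. -/
theorem stmt11 (T : Set ℝ) (hT : IsClosed T) (a b : ℝ)
    (ha : IsLeast T a) (hb : IsGreatest T b) (f : ℝ → ℝ) :
    ConvexOn ℝ (Set.Icc a b) (pwExt T f) ↔
      (∀ x ∈ T, ∀ y ∈ T, ∀ l ∈ Set.Icc (0 : ℝ) 1,
        l * x + (1 - l) * y ∈ T →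
          f (l * x + (1 - l) * y) ≤ l * f x + (1 - l) * f y) := by
  have hsub : T ⊆ Set.Icc a b := fun w hw => ⟨ha.2 hw, hb.2 hw⟩
  constructor
  · intro hcv x hx y hy l hl hmem
    have h := hcv.2 (hsub hx) (hsub hy) hl.1 (by linarith [hl.2] : (0:ℝ) ≤ 1 - l)
      (show l + (1 - l) = 1 by ring)
    simp only [smul_eq_mul] at h
    rw [pwExt_mem hx, pwExt_mem hy, pwExt_mem hmem] at h
    exact h
  · intro hconv
    refine ⟨convex_Icc a b, ?_⟩
    intro x hx y hy lam mu hlam hmu hlm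
    simp only [smul_eq_mul]
    rcases le_total x y with hxy | hyx
    · exact combo hT ha hb hconv hx hy hlam hmu hlm hxy
    · have hcomm : lam * x + mu * y = mu * y + lam * x := by ring
      rw [hcomm]
      have := combo hT ha hb hconv hy hx hmu hlam (by linarith) hyx
      linarith
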